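/- Let B₀, ..., B_{k−1}: X → ℝ be a (multi-function) k-inductive barrier certificate for a discrete-time stochastic system S, i.e., there exist k ∈ ℕ_{≥1} and λ_i > 0 (0 ≤ i < k) such that: B_i(x) ≥ 0 for all x ∈ X; B₀(x) ≤ λ₀ for all x ∈ X₀; B_i(x) ≥ 1 for all x ∈ X_u; E[B_i(f^i(x₀, w_i)) | x₀] ≤ λ_i for all x₀ ∈ X₀ and 1 ≤ i < k; and E[B_i(f^k(x, w_k)) | x] ≤ B_i(x) for all x ∈ X \ X_u and 0 ≤ i < k. Then for every x₀ ∈ X₀, P{x_{x₀}(t) ∉ X_u for all t ∈ ℕ} ≥ 1 − ∑_{i=0}^{k−1} λ_i. -/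

import Mathlib

open MeasureTheory

/-- `iterNoise f n x w` is the `n`-fold composition `f^n(x, w)` of the transition map `f`,
fed with the noise vector `w = (w 0, …, w (n-1))`. -/
def iterNoise {X W : Type*} (f : X → W → X) : (n : ℕ) → X → (Fin n → W) → X
  | 0, x, _ => x
  | n + 1, x, w => f (iterNoise f n x fun i => w i.castSucc) (w (Fin.last n))

open Filter Topology ENNReal in
lemma measurable_iterNoise {X W : Type*} [MeasurableSpace X] [MeasurableSpace W]
    {f : X → W → X} (hf : Measurable (Function.uncurry f)) (n : ℕ) :
    Measurable (fun p : X × (Fin n → W) => iterNoise f n p.1 p.2) := by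
  induction n with
  | zero => simpa [iterNoise] using measurable_fst
  | succ n ih =>
    have h1 : Measurable (fun p : X × (Fin (n+1) → W) =>
        iterNoise f n p.1 (fun i => p.2 i.castSucc)) :=
      ih.comp (measurable_fst.prodMk (by measurability))
    exact hf.comp (h1.prodMk (by measurability))

open Filter Topology ENNReal in
lemma key {Ω : Type*} {m : MeasurableSpace Ω} (μ : Measure Ω) [IsProbabilityMeasure μ]
    {X : Type*} [MeasurableSpace X] {W : Type*} [MeasurableSpace W]
    (μW : Measure W) [IsProbabilityMeasure μW]
    {f : X → W → X} (hf : Measurable (Function.uncurry f))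
    {Bi : X → ℝ} (hBmeas : Measurable Bi)
    (x : ℕ → Ω → X) (ℱ : Filtration ℕ m)
    (hMarkov : ∀ (t n : ℕ) (g : X → ℝ), Measurable g → (∃ C, ∀ y, |g y| ≤ C) →
      μ[(fun ω => g (x (t + n) ω))|ℱ t] =ᵐ[μ]
        fun ω => ∫ w, g (iterNoise f n (x t ω) w) ∂(Measure.pi fun _ : Fin n => μW))
    (t n : ℕ) (hxt : Measurable (x t)) (hxtn : Measurable (x (t+n)))
    (hpos : ∀ ω, 0 ≤ Bi (x (t+n) ω))
    (hint : Integrable (fun ω => Bi (x (t+n) ω)) μ)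
    (G : Set Ω) (hG : MeasurableSet[ℱ t] G)
    (c : Ω → ℝ) (hc : Integrable c μ) (hc0 : ∀ ω ∈ G, 0 ≤ c ω)
    (hle : ∀ ω ∈ G, ∫ w, Bi (iterNoise f n (x t ω) w) ∂(Measure.pi fun _ : Fin n => μW) ≤ c ω) :
    ∫ ω in G, Bi (x (t+n) ω) ∂μ ≤ ∫ ω in G, c ω ∂μ := by
  set ν : Measure (Fin n → W) := Measure.pi fun _ : Fin n => μW with hν
  haveI : IsProbabilityMeasure ν := by rw [hν]; infer_instance
  have hG' : MeasurableSet G := ℱ.le t _ hG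
  have hF : Measurable (fun p : Ω × (Fin n → W) => iterNoise f n (x t p.1) p.2) :=
    (measurable_iterNoise hf n).comp ((hxt.comp measurable_fst).prodMk measurable_snd)
  -- truncations g C = max 0 (min Bi C)
  set g : ℕ → X → ℝ := fun C y => max 0 (min (Bi y) C) with hg
  have hgmeas : ∀ C : ℕ, Measurable (g C) := fun C =>
    measurable_const.max (hBmeas.min measurable_const)
  have hg0 : ∀ (C : ℕ) y, 0 ≤ g C y := fun C y => le_max_left _ _
  have hgbd : ∀ C : ℕ, ∀ y, |g C y| ≤ (C : ℝ) := by
    intro C y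
    rw [abs_le]
    refine ⟨by linarith [hg0 C y, (Nat.cast_nonneg C : (0:ℝ) ≤ C)], ?_⟩
    exact max_le (Nat.cast_nonneg C) (min_le_right _ _)
  have hgmono : ∀ y, Monotone fun C : ℕ => g C y := fun y C1 C2 h =>
    max_le_max le_rfl (min_le_min le_rfl (Nat.cast_le.mpr h))
  have hgev : ∀ (z : X) (C : ℕ), Bi z ≤ C → g C z = max 0 (Bi z) := by
    intro z C h; rw [hg]; simp [min_eq_left h]
  -- g C (x(t+n)) is integrable and → Bi (x(t+n))
  have hintg : ∀ C : ℕ, Integrable (fun ω => g C (x (t+n) ω)) μ := fun C =>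
    ⟨((hgmeas C).comp hxtn).aestronglyMeasurable,
      HasFiniteIntegral.of_bounded (C := (C:ℝ)) (ae_of_all _ fun ω => by
        simpa [Real.norm_eq_abs] using hgbd C _)⟩
  -- the inner-integral functions
  set I : ℕ → Ω → ℝ := fun C ω => ∫ w, g C (iterNoise f n (x t ω) w) ∂ν with hI
  have hgFmeas : ∀ (C : ℕ) (ω : Ω), Measurable (fun w => g C (iterNoise f n (x t ω) w)) :=
    fun C ω => ((hgmeas C).comp hF).comp measurable_prodMk_left
  have hgint : ∀ (C : ℕ) (ω : Ω), Integrable (fun w => g C (iterNoise f n (x t ω) w)) ν :=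
    fun C ω => ⟨(hgFmeas C ω).aestronglyMeasurable,
      HasFiniteIntegral.of_bounded (C := (C:ℝ)) (ae_of_all _ fun w => by
        simpa [Real.norm_eq_abs] using hgbd C _)⟩
  have hImeas : ∀ C, Measurable (I C) := fun C =>
    (StronglyMeasurable.integral_prod_right' (ν := ν) ((hgmeas C).comp hF).stronglyMeasurable).measurable
  have hI0 : ∀ (C : ℕ) ω, 0 ≤ I C ω := fun C ω => integral_nonneg fun w => hg0 C _
  have hIbd : ∀ (C : ℕ) ω, |I C ω| ≤ (C:ℝ) := by
    intro C ω
    rw [abs_of_nonneg (hI0 C ω)]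
    calc I C ω ≤ ∫ _, (C:ℝ) ∂ν := integral_mono (hgint C ω) (integrable_const _)
          (fun w => (abs_le.mp (hgbd C _)).2)
      _ = C := by simp
  have hIint : ∀ C, Integrable (I C) μ := fun C =>
    ⟨(hImeas C).aestronglyMeasurable,
      HasFiniteIntegral.of_bounded (C := (C:ℝ)) (ae_of_all _ fun ω => by
        simpa [Real.norm_eq_abs] using hIbd C ω)⟩
  have hImono : ∀ ω, Monotone fun C : ℕ => I C ω := fun ω C1 C2 h =>
    integral_mono (hgint C1 ω) (hgint C2 ω) (fun w => hgmono _ h)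
  -- the Markov identity for truncations
  have hA : ∀ C : ℕ, ∫ ω in G, g C (x (t+n) ω) ∂μ = ∫ ω in G, I C ω ∂μ := by
    intro C
    have h := hMarkov t n (g C) (hgmeas C) ⟨C, hgbd C⟩
    calc ∫ ω in G, g C (x (t+n) ω) ∂μ
        = ∫ ω in G, (μ[(fun ω => g C (x (t + n) ω))|ℱ t]) ω ∂μ :=
          (setIntegral_condExp (ℱ.le t) (hintg C) hG).symm
      _ = ∫ ω in G, I C ω ∂μ := setIntegral_congr_ae hG' (h.mono fun ω hω _ => hω)
  -- a.e. nonnegativity of Bi along the inner dynamics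
  have hnn : ∀ᵐ ω ∂μ, ∀ᵐ w ∂ν, 0 ≤ Bi (iterNoise f n (x t ω) w) := by
    set q : X → ℝ := fun y => min (max (-(Bi y)) 0) 1 with hq
    have hqmeas : Measurable q := (hBmeas.neg.max measurable_const).min measurable_const
    have hq0 : ∀ y, 0 ≤ q y := fun y => le_min (le_max_right _ _) one_pos.le
    have hqbd : ∀ y, |q y| ≤ 1 := fun y => abs_le.2 ⟨by linarith [hq0 y], min_le_right _ _⟩
    have h := hMarkov t n q hqmeas ⟨1, hqbd⟩
    have hzero : (fun ω => q (x (t+n) ω)) = fun _ => (0:ℝ) := funext fun ω => by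
      have h1 : max (-(Bi (x (t+n) ω))) 0 = 0 := max_eq_right (by linarith [hpos ω])
      rw [hq]; simp only [h1]; rw [min_eq_left one_pos.le]
    rw [hzero] at h
    have h0 : μ[(fun _ : Ω => (0:ℝ))|ℱ t] =ᵐ[μ] fun _ => 0 := by
      rw [show (fun _ : Ω => (0:ℝ)) = (0 : Ω → ℝ) from rfl, condExp_zero]
    have h' : (fun _ : Ω => (0:ℝ)) =ᵐ[μ] fun ω => ∫ w, q (iterNoise f n (x t ω) w) ∂ν :=
      h0.symm.trans h
    filter_upwards [h'] with ω hω
    have hqint : Integrable (fun w => q (iterNoise f n (x t ω) w)) ν :=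
      ⟨((hqmeas.comp hF).comp measurable_prodMk_left).aestronglyMeasurable,
        HasFiniteIntegral.of_bounded (C := (1:ℝ)) (ae_of_all _ fun w => by
          simpa [Real.norm_eq_abs] using hqbd _)⟩
    have hz := (integral_eq_zero_iff_of_nonneg (fun w => hq0 _) hqint).mp hω.symm
    filter_upwards [hz] with w hw
    by_contra hcon
    push_neg at hcon
    have h1 : max (-(Bi (iterNoise f n (x t ω) w))) 0 = -(Bi (iterNoise f n (x t ω) w)) :=
      max_eq_left (by linarith)
    have h2 : (0:ℝ) < min (-(Bi (iterNoise f n (x t ω) w))) 1 := lt_min (by linarith) one_pos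
    simp only [Pi.zero_apply, hq, h1] at hw
    linarith
  -- φ : upper lintegral of Bi along inner dynamics
  set φ : Ω → ℝ≥0∞ := fun ω => ∫⁻ w, ENNReal.ofReal (Bi (iterNoise f n (x t ω) w)) ∂ν with hφ
  have hφmeas : Measurable φ := (hBmeas.comp hF).ennreal_ofReal.lintegral_prod_right'
  have hIof : ∀ (C : ℕ) ω, ENNReal.ofReal (I C ω)
      = ∫⁻ w, ENNReal.ofReal (g C (iterNoise f n (x t ω) w)) ∂ν :=
    fun C ω => ofReal_integral_eq_lintegral_ofReal (hgint C ω) (ae_of_all _ fun w => hg0 C _)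
  have htendz : ∀ z, Tendsto (fun C : ℕ => ENNReal.ofReal (g C z)) atTop
      (𝓝 (ENNReal.ofReal (Bi z))) := by
    intro z
    have hor : ENNReal.ofReal (max 0 (Bi z)) = ENNReal.ofReal (Bi z) := by
      rcases le_total 0 (Bi z) with h | h
      · rw [max_eq_right h]
      · rw [max_eq_left h, ENNReal.ofReal_zero, eq_comm, ENNReal.ofReal_eq_zero]; exact h
    rw [← hor]
    refine tendsto_const_nhds.congr' (eventually_atTop.mpr ⟨⌈Bi z⌉₊, fun C hC => ?_⟩)
    exact congrArg ENNReal.ofReal (hgev z C (le_trans (Nat.le_ceil _) (Nat.cast_le.mpr hC))).symm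
  have hφtend : ∀ ω, Tendsto (fun C : ℕ => ENNReal.ofReal (I C ω)) atTop (𝓝 (φ ω)) := by
    intro ω
    simp_rw [hIof]
    refine lintegral_tendsto_of_tendsto_of_monotone
      (fun C => ((hgFmeas C ω).ennreal_ofReal).aemeasurable)
      (ae_of_all _ fun w C1 C2 h => ENNReal.ofReal_le_ofReal (hgmono _ h)) ?_
    exact ae_of_all _ fun w => htendz _
  -- the main limit identity
  have hL : Tendsto (fun C : ℕ => ∫ ω in G, g C (x (t+n) ω) ∂μ) atTop
      (𝓝 (∫ ω in G, Bi (x (t+n) ω) ∂μ)) := by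
    refine integral_tendsto_of_tendsto_of_monotone (fun C => (hintg C).restrict)
      hint.restrict (ae_of_all _ fun ω C1 C2 h => hgmono _ h) (ae_of_all _ fun ω => ?_)
    have hor : max 0 (Bi (x (t+n) ω)) = Bi (x (t+n) ω) := max_eq_right (hpos ω)
    rw [← hor]
    refine tendsto_const_nhds.congr' (eventually_atTop.mpr ⟨⌈Bi (x (t+n) ω)⌉₊, fun C hC => ?_⟩)
    exact (hgev _ C (le_trans (Nat.le_ceil _) (Nat.cast_le.mpr hC))).symm
  have hlintend : Tendsto (fun C : ℕ => ∫⁻ ω in G, ENNReal.ofReal (I C ω) ∂μ) atTop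
      (𝓝 (∫⁻ ω in G, φ ω ∂μ)) :=
    lintegral_tendsto_of_tendsto_of_monotone
      (fun C => ((hImeas C).ennreal_ofReal).aemeasurable)
      (ae_of_all _ fun ω C1 C2 h => ENNReal.ofReal_le_ofReal (hImono ω h))
      (ae_of_all _ fun ω => hφtend ω)
  have hkey : ∫⁻ ω in G, φ ω ∂μ = ENNReal.ofReal (∫ ω in G, Bi (x (t+n) ω) ∂μ) := by
    have h1 : Tendsto (fun C : ℕ => ∫⁻ ω in G, ENNReal.ofReal (I C ω) ∂μ) atTop
        (𝓝 (ENNReal.ofReal (∫ ω in G, Bi (x (t+n) ω) ∂μ))) := by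
      have h2 := (ENNReal.continuous_ofReal.tendsto _).comp hL
      refine h2.congr fun C => ?_
      rw [Function.comp_apply, hA C,
        ofReal_integral_eq_lintegral_ofReal (hIint C).restrict (ae_of_all _ fun ω => hI0 C ω)]
    exact tendsto_nhds_unique hlintend h1
  have hfin : ∫⁻ ω in G, φ ω ∂μ ≠ ⊤ := by rw [hkey]; exact ENNReal.ofReal_ne_top
  -- a.e. on G : φ ≤ ofReal c
  have hb : ∀ᵐ ω ∂μ.restrict G, φ ω ≤ ENNReal.ofReal (c ω) := by
    filter_upwards [ae_restrict_of_ae hnn, ae_restrict_mem hG', ae_lt_top hφmeas hfin]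
      with ω hw hG1 hφω
    have hmeasw : Measurable (fun w => Bi (iterNoise f n (x t ω) w)) :=
      hBmeas.comp (hF.comp measurable_prodMk_left)
    have hintw : Integrable (fun w => Bi (iterNoise f n (x t ω) w)) ν :=
      ⟨hmeasw.aestronglyMeasurable, (hasFiniteIntegral_iff_ofReal hw).mpr hφω⟩
    have heq : ∫ w, Bi (iterNoise f n (x t ω) w) ∂ν = (φ ω).toReal := by
      rw [integral_eq_lintegral_of_nonneg_ae hw hintw.1]
    have hle' := hle ω hG1
    rw [heq] at hle'
    calc φ ω = ENNReal.ofReal (φ ω).toReal := (ENNReal.ofReal_toReal hφω.ne).symm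
      _ ≤ ENNReal.ofReal (c ω) := ENNReal.ofReal_le_ofReal hle'
  have hcpos : 0 ≤ᵐ[μ.restrict G] c := (ae_restrict_mem hG').mono fun ω h => hc0 ω h
  have hcl : ∫ ω in G, c ω ∂μ = (∫⁻ ω in G, ENNReal.ofReal (c ω) ∂μ).toReal :=
    integral_eq_lintegral_of_nonneg_ae hcpos hc.restrict.aestronglyMeasurable
  have hcfin : ∫⁻ ω in G, ENNReal.ofReal (c ω) ∂μ ≠ ⊤ := by
    have h1 : ∫⁻ ω in G, ENNReal.ofReal (c ω) ∂μ ≤ ∫⁻ ω in G, ‖c ω‖ₑ ∂μ :=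
      lintegral_mono fun ω => Real.ofReal_le_enorm _
    exact (lt_of_le_of_lt h1 hc.restrict.hasFiniteIntegral).ne
  have hLnn : 0 ≤ ∫ ω in G, Bi (x (t+n) ω) ∂μ := setIntegral_nonneg hG' fun ω _ => hpos ω
  calc ∫ ω in G, Bi (x (t+n) ω) ∂μ
      = (ENNReal.ofReal (∫ ω in G, Bi (x (t+n) ω) ∂μ)).toReal := (ENNReal.toReal_ofReal hLnn).symm
    _ = (∫⁻ ω in G, φ ω ∂μ).toReal := by rw [hkey]
    _ ≤ (∫⁻ ω in G, ENNReal.ofReal (c ω) ∂μ).toReal :=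
        ENNReal.toReal_mono hcfin (lintegral_mono_ae hb)
    _ = ∫ ω in G, c ω ∂μ := hcl.symm

/-- Theorem 3.4: a multi-function `k`-inductive barrier certificate `B₀,…,B_{k-1}` implies
safety with probability at least `1 - ∑_{i=0}^{k-1} λ_i`. -/
theorem stmt_8 {Ω : Type*} {m : MeasurableSpace Ω} (μ : Measure Ω) [IsProbabilityMeasure μ]
    {X : Type*} [MeasurableSpace X] {W : Type*} [MeasurableSpace W]
    (μW : Measure W) [IsProbabilityMeasure μW]
    (Xs X0 Xu : Set X) (hX0sub : X0 ⊆ Xs) (hXusub : Xu ⊆ Xs) (hXu : MeasurableSet Xu)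
    (f : X → W → X) (hf : Measurable (Function.uncurry f))
    (k : ℕ) (hk : 1 ≤ k)
    (B : ℕ → X → ℝ) (hBmeas : ∀ i, Measurable (B i))
    (lam : ℕ → ℝ) (hlam : ∀ i < k, 0 < lam i)
    -- multi-function k-BC conditions (Definition 3.3)
    (hB0 : ∀ i < k, ∀ x ∈ Xs, 0 ≤ B i x)
    (hBinit : ∀ x ∈ X0, B 0 x ≤ lam 0)
    (hBunsafe : ∀ i < k, ∀ x ∈ Xu, 1 ≤ B i x)
    (hBlam : ∀ i, 1 ≤ i → i < k → ∀ x0 ∈ X0,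
      ∫ w, B i (iterNoise f i x0 w) ∂(Measure.pi fun _ : Fin i => μW) ≤ lam i)
    (hBsuper : ∀ i < k, ∀ x ∈ Xs \ Xu,
      ∫ w, B i (iterNoise f k x w) ∂(Measure.pi fun _ : Fin k => μW) ≤ B i x)
    -- the solution process starting from x0 ∈ X0
    (x0 : X) (hx0 : x0 ∈ X0)
    (x : ℕ → Ω → X) (ℱ : Filtration ℕ m)
    (hadapted : ∀ t, Measurable[ℱ t] (x t))
    (hmeasx : ∀ t, Measurable (x t))
    (hinit : ∀ ω, x 0 ω = x0)
    (hinv : ∀ t ω, x t ω ∈ Xs)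
    (hintB : ∀ i t, Integrable (fun ω => B i (x t ω)) μ)
    (hMarkov : ∀ (t n : ℕ) (g : X → ℝ), Measurable g → (∃ C, ∀ y, |g y| ≤ C) →
      μ[(fun ω => g (x (t + n) ω))|ℱ t] =ᵐ[μ]
        fun ω => ∫ w, g (iterNoise f n (x t ω) w) ∂(Measure.pi fun _ : Fin n => μW)) :
    ENNReal.ofReal (1 - ∑ i ∈ Finset.range k, lam i) ≤ μ {ω | ∀ t, x t ω ∉ Xu} := by
  -- Step C: bound on the head expectation
  have hhead : ∀ i, i < k → ∫ ω, B i (x i ω) ∂μ ≤ lam i := by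
    intro i hik
    rcases Nat.eq_zero_or_pos i with h0 | h1
    · subst h0
      have he : (fun ω => B 0 (x 0 ω)) = fun _ => B 0 x0 := funext fun ω => by rw [hinit ω]
      rw [he, integral_const]
      simp only [measure_univ, probReal_univ, one_smul]
      exact hBinit x0 hx0
    · have hres := key μ μW hf (hBmeas i) x ℱ hMarkov 0 i (hmeasx 0) (hmeasx (0+i))
        (fun ω => hB0 i hik _ (hinv (0+i) ω)) (hintB i (0+i)) Set.univ MeasurableSet.univ
        (fun _ => lam i) (integrable_const _) (fun ω _ => (hlam i hik).le)
        (fun ω _ => by rw [hinit ω]; exact hBlam i h1 hik x0 hx0)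
      simp only [Measure.restrict_univ, integral_const, measure_univ, probReal_univ,
        one_smul, Nat.zero_add] at hres
      exact hres
  -- per-residue bound
  have hres : ∀ i, i < k → μ {ω | ∃ j, x (i + j*k) ω ∈ Xu} ≤ ENNReal.ofReal (lam i) := by
    intro i hik
    set T : ℕ → ℕ := fun j => i + j*k with hT
    set Bd : ℕ → Set Ω := fun n => {ω | ∃ j ≤ n, x (T j) ω ∈ Xu} with hBd
    have hTmono : Monotone T := fun a b hab => Nat.add_le_add_left (Nat.mul_le_mul_right k hab) i
    have hBdF : ∀ n, MeasurableSet[ℱ (T n)] (Bd n) := by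
      intro n
      have he : Bd n = ⋃ j ∈ Set.Iic n, x (T j) ⁻¹' Xu := by
        ext ω; simp [hBd]
      rw [he]
      exact MeasurableSet.biUnion (Set.to_countable _)
        fun j hj => ℱ.mono (hTmono hj) _ ((hadapted (T j)) hXu)
    have hBdM : ∀ n, MeasurableSet (Bd n) := fun n => ℱ.le _ _ (hBdF n)
    have hBdmono : Monotone Bd := fun a b hab ω ⟨j, hj, hm⟩ => ⟨j, le_trans hj hab, hm⟩
    -- the main supermartingale induction
    have hmain : ∀ n, (μ (Bd n)).toReal + ∫ ω in (Bd n)ᶜ, B i (x (T n) ω) ∂μ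
        ≤ ∫ ω, B i (x (T 0) ω) ∂μ := by
      intro n
      induction n with
      | zero =>
        have hBd0 : Bd 0 = x (T 0) ⁻¹' Xu := by
          ext ω; simp [hBd]
        have h1 : (μ (Bd 0)).toReal ≤ ∫ ω in Bd 0, B i (x (T 0) ω) ∂μ := by
          have he : (μ (Bd 0)).toReal = ∫ _ω in Bd 0, (1:ℝ) ∂μ := by
            rw [setIntegral_const]; simp [Measure.real]
          rw [he]
          refine setIntegral_mono_on (integrable_const _).integrableOn
            (hintB i (T 0)).integrableOn (hBdM 0) fun ω hω => ?_
          rw [hBd0] at hω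
          exact hBunsafe i hik _ hω
        have h2 := integral_add_compl (hBdM 0) (hintB i (T 0))
        linarith
      | succ n ih =>
        have hTsucc : T (n+1) = T n + k := by simp [hT, Nat.succ_mul, Nat.add_assoc]
        set E : Set Ω := x (T (n+1)) ⁻¹' Xu with hE
        have hEm : MeasurableSet E := (hmeasx _) hXu
        have hsplit : Bd (n+1) = Bd n ∪ ((Bd n)ᶜ ∩ E) := by
          ext ω
          simp only [hBd, hE, Set.mem_union, Set.mem_inter_iff, Set.mem_compl_iff,
            Set.mem_setOf_eq, Set.mem_preimage]
          constructor
          · rintro ⟨j, hj, hmem⟩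
            rcases Nat.eq_or_lt_of_le hj with h | h
            · by_cases hcase : ∃ j' ≤ n, x (T j') ω ∈ Xu
              · exact Or.inl hcase
              · subst h; exact Or.inr ⟨hcase, hmem⟩
            · exact Or.inl ⟨j, Nat.lt_succ_iff.mp h, hmem⟩
          · rintro (⟨j, hj, hmem⟩ | ⟨h1, h2⟩)
            · exact ⟨j, le_trans hj (Nat.le_succ n), hmem⟩
            · exact ⟨n+1, le_rfl, h2⟩
        have hcsplit : (Bd (n+1))ᶜ = (Bd n)ᶜ \ E := by
          rw [hsplit]; ext ω
          simp only [Set.mem_compl_iff, Set.mem_union, Set.mem_inter_iff, Set.mem_diff,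
            Set.mem_compl_iff]
          tauto
        have hdisj : Disjoint (Bd n) ((Bd n)ᶜ ∩ E) :=
          disjoint_compl_right.mono_right Set.inter_subset_left
        have hmeq : (μ (Bd (n+1))).toReal
            = (μ (Bd n)).toReal + (μ ((Bd n)ᶜ ∩ E)).toReal := by
          rw [hsplit, measure_union hdisj ((hBdM n).compl.inter hEm),
            ENNReal.toReal_add (measure_ne_top _ _) (measure_ne_top _ _)]
        have h1 : (μ ((Bd n)ᶜ ∩ E)).toReal ≤ ∫ ω in (Bd n)ᶜ ∩ E, B i (x (T (n+1)) ω) ∂μ := by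
          have he : (μ ((Bd n)ᶜ ∩ E)).toReal = ∫ _ω in (Bd n)ᶜ ∩ E, (1:ℝ) ∂μ := by
            rw [setIntegral_const]; simp [Measure.real]
          rw [he]
          refine setIntegral_mono_on (integrable_const _).integrableOn
            (hintB i (T (n+1))).integrableOn ((hBdM n).compl.inter hEm) fun ω hω => ?_
          exact hBunsafe i hik _ hω.2
        have h2 : ∫ ω in (Bd n)ᶜ ∩ E, B i (x (T (n+1)) ω) ∂μ
            + ∫ ω in (Bd n)ᶜ \ E, B i (x (T (n+1)) ω) ∂μ
            = ∫ ω in (Bd n)ᶜ, B i (x (T (n+1)) ω) ∂μ :=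
          integral_inter_add_diff hEm (hintB i (T (n+1))).integrableOn
        have hsuper : ∫ ω in (Bd n)ᶜ, B i (x (T n + k) ω) ∂μ
            ≤ ∫ ω in (Bd n)ᶜ, B i (x (T n) ω) ∂μ :=
          key μ μW hf (hBmeas i) x ℱ hMarkov (T n) k (hmeasx _) (hmeasx _)
            (fun ω => hB0 i hik _ (hinv _ ω)) (hintB i _) ((Bd n)ᶜ) (hBdF n).compl
            (fun ω => B i (x (T n) ω)) (hintB i _) (fun ω _ => hB0 i hik _ (hinv _ ω))
            (fun ω hω => hBsuper i hik _ ⟨hinv _ ω, fun hmem => hω ⟨n, le_rfl, hmem⟩⟩)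
        rw [← hTsucc] at hsuper
        rw [hmeq, hcsplit]
        linarith
    have hbound : ∀ n, μ (Bd n) ≤ ENNReal.ofReal (lam i) := by
      intro n
      have hT0 : T 0 = i := by simp [hT]
      have h1 : (μ (Bd n)).toReal ≤ lam i := by
        have h2 := hmain n
        have h3 : 0 ≤ ∫ ω in (Bd n)ᶜ, B i (x (T n) ω) ∂μ :=
          setIntegral_nonneg (hBdM n).compl fun ω _ => hB0 i hik _ (hinv _ ω)
        have h4 : ∫ ω, B i (x (T 0) ω) ∂μ ≤ lam i := by rw [hT0]; exact hhead i hik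
        linarith
      calc μ (Bd n) = ENNReal.ofReal ((μ (Bd n)).toReal) :=
            (ENNReal.ofReal_toReal (measure_ne_top _ _)).symm
        _ ≤ ENNReal.ofReal (lam i) := ENNReal.ofReal_le_ofReal h1
    have hU : {ω | ∃ j, x (i + j*k) ω ∈ Xu} = ⋃ n, Bd n := by
      ext ω
      simp only [Set.mem_iUnion, hBd, Set.mem_setOf_eq]
      exact ⟨fun ⟨j, hj⟩ => ⟨j, j, le_rfl, hj⟩, fun ⟨n, j, _, hj⟩ => ⟨j, hj⟩⟩
    rw [hU, hBdmono.directed_le.measure_iUnion]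
    exact iSup_le hbound
  -- assembly
  have hcover : {ω | ∃ t, x t ω ∈ Xu} ⊆ ⋃ i ∈ Finset.range k, {ω | ∃ j, x (i + j*k) ω ∈ Xu} := by
    rintro ω ⟨t, ht⟩
    refine Set.mem_biUnion (Finset.mem_range.mpr (Nat.mod_lt t hk)) ⟨t / k, ?_⟩
    show x (t % k + t / k * k) ω ∈ Xu
    rw [Nat.mod_add_div']
    exact ht
  have hbad : μ {ω | ∃ t, x t ω ∈ Xu} ≤ ENNReal.ofReal (∑ i ∈ Finset.range k, lam i) := by
    calc μ {ω | ∃ t, x t ω ∈ Xu}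
        ≤ ∑ i ∈ Finset.range k, μ {ω | ∃ j, x (i + j*k) ω ∈ Xu} :=
          le_trans (measure_mono hcover) (measure_biUnion_finset_le _ _)
      _ ≤ ∑ i ∈ Finset.range k, ENNReal.ofReal (lam i) :=
          Finset.sum_le_sum fun i hi => hres i (Finset.mem_range.mp hi)
      _ = ENNReal.ofReal (∑ i ∈ Finset.range k, lam i) :=
          (ENNReal.ofReal_sum_of_nonneg fun i hi => (hlam i (Finset.mem_range.mp hi)).le).symm
  have hset : {ω | ∀ t, x t ω ∉ Xu} = {ω | ∃ t, x t ω ∈ Xu}ᶜ := by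
    ext ω; simp
  have hmbad : MeasurableSet {ω | ∃ t, x t ω ∈ Xu} := by
    have he : {ω | ∃ t, x t ω ∈ Xu} = ⋃ t, x t ⁻¹' Xu := by ext ω; simp
    rw [he]
    exact MeasurableSet.iUnion fun t => (hmeasx t) hXu
  rw [hset, measure_compl hmbad (measure_ne_top _ _), measure_univ]
  have hs0 : 0 ≤ ∑ i ∈ Finset.range k, lam i :=
    Finset.sum_nonneg fun i hi => (hlam i (Finset.mem_range.mp hi)).le
  calc ENNReal.ofReal (1 - ∑ i ∈ Finset.range k, lam i)
      = ENNReal.ofReal 1 - ENNReal.ofReal (∑ i ∈ Finset.range k, lam i) :=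
        ENNReal.ofReal_sub _ hs0
    _ = 1 - ENNReal.ofReal (∑ i ∈ Finset.range k, lam i) := by rw [ENNReal.ofReal_one]
    _ ≤ 1 - μ {ω | ∃ t, x t ω ∈ Xu} := tsub_le_tsub le_rfl hbad
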